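/- If Cl(V,Q) is a real Clifford algebra with dim V even and the volume element ω satisfies ω² = 1 (positive type), then Cl(V ⊕ V', Q ⊕ Q') ≅ Cl(V,Q) ⊗ Cl(V',Q') as an ungraded tensor product; if ω² = −1 (negative type), then Cl(V ⊕ V', Q ⊕ Q') ≅ Cl(V,Q) ⊗ Cl(V',−Q'). -/

import Mathlib

open CliffordAlgebra

/-- The quadratic form of signature `(p,q)` on `ℝ^{p+q}`:
`x₁² + … + x_p² − x_{p+1}² − … − x_{p+q}²`. -/
noncomputable abbrev Qpq (p q : ℕ) : QuadraticForm ℝ (Fin (p + q) → ℝ) :=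
  QuadraticMap.weightedSumSquares ℝ (fun i : Fin (p + q) => if (i : ℕ) < p then (1 : ℝ) else -1)

/-- The real Clifford algebra `Cl_{p,q}`. -/
noncomputable abbrev Cl (p q : ℕ) := CliffordAlgebra (Qpq p q)

/-- The canonical generators `e_i` of `Cl_{p,q}`. -/
noncomputable def gen (p q : ℕ) (i : Fin (p + q)) : Cl p q :=
  CliffordAlgebra.ι (Qpq p q) (Pi.single i 1)

/-- The volume element `ω = e₁e₂⋯e_{p+q}` of `Cl_{p,q}`. -/
noncomputable def vol (p q : ℕ) : Cl p q := (List.ofFn (gen p q)).prod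

open scoped TensorProduct

lemma mul_list_prod_of_anticomm {A : Type*} [Ring A] (x : A) (l : List A)
    (h : ∀ a ∈ l, x * a = -(a * x)) :
    x * l.prod = (-1 : A) ^ l.length * (l.prod * x) := by
  induction l with
  | nil => simp
  | cons a t ih =>
    have ht : ∀ b ∈ t, x * b = -(b * x) := fun b hb => h b (List.mem_cons_of_mem a hb)
    have hc : Commute ((-1 : A) ^ t.length) a := (Commute.neg_one_left a).pow_left t.length
    calc x * (a :: t).prod = (x * a) * t.prod := by rw [List.prod_cons, mul_assoc]
      _ = -(a * (x * t.prod)) := by rw [h a List.mem_cons_self, neg_mul, mul_assoc]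
      _ = -(a * ((-1 : A) ^ t.length * (t.prod * x))) := by rw [ih ht]
      _ = (-1 : A) ^ (a :: t).length * ((a :: t).prod * x) := by
          rw [List.length_cons, List.prod_cons, pow_succ, ← mul_assoc a, ← hc.eq]
          simp only [mul_assoc, neg_mul, mul_neg, one_mul, neg_neg, mul_one]


lemma Qpq_single (p q : ℕ) (i : Fin (p + q)) (r : ℝ) :
    Qpq p q (Pi.single i r) = (if (i : ℕ) < p then (1:ℝ) else -1) * (r * r) := by
  rw [QuadraticMap.weightedSumSquares_apply]
  rw [Finset.sum_eq_single i]
  · simp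
  · intro b _ hb; simp [Pi.single_apply, hb]
  · simp

lemma Qpq_isOrtho_single (p q : ℕ) {i j : Fin (p + q)} (hij : i ≠ j) :
    (Qpq p q).IsOrtho (Pi.single i 1) (Pi.single j 1) := by
  unfold QuadraticMap.IsOrtho
  simp only [QuadraticMap.weightedSumSquares_apply]
  rw [← Finset.sum_add_distrib]
  refine Finset.sum_congr rfl fun k _ => ?_
  simp only [Pi.add_apply, Pi.single_apply]
  rcases eq_or_ne k i with rfl | hki <;> rcases eq_or_ne k j with rfl | hkj <;>
    simp_all <;> ring

lemma gen_anticomm (p q : ℕ) {i j : Fin (p + q)} (hij : i ≠ j) :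
    gen p q i * gen p q j = -(gen p q j * gen p q i) :=
  ι_mul_ι_comm_of_isOrtho (Qpq_isOrtho_single p q hij)

lemma gen_sq (p q : ℕ) (i : Fin (p + q)) :
    gen p q i * gen p q i = algebraMap ℝ (Cl p q) (if (i : ℕ) < p then 1 else -1) := by
  rw [gen, ι_sq_scalar, Qpq_single]
  norm_num

lemma gen_mul_vol (p q : ℕ) (hpq : Even (p + q)) (i : Fin (p + q)) :
    gen p q i * vol p q = -(vol p q * gen p q i) := by
  classical
  set l : List (Cl p q) := List.ofFn (gen p q) with hl
  have hlen : l.length = p + q := by simp [hl]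
  have hi : (i : ℕ) < l.length := by rw [hlen]; exact i.isLt
  have hsplit : l = l.take i ++ gen p q i :: l.drop (i + 1) := by
    conv_lhs => rw [← List.take_append_drop (i : ℕ) l]
    congr 1
    rw [List.drop_eq_getElem_cons hi]
    congr 1
    simp [hl]
  have htake : ∀ a ∈ l.take (i : ℕ), gen p q i * a = -(a * gen p q i) := by
    intro a ha
    rw [List.mem_iff_getElem] at ha
    obtain ⟨k, hk, rfl⟩ := ha
    have hk2 : k < (i : ℕ) := by
      simp only [List.length_take, hlen] at hk; omega
    have hkl : k < p + q := lt_trans hk2 i.isLt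
    have he : (List.take (↑i) l)[k] = gen p q ⟨k, hkl⟩ := by
      simp [hl]
    rw [he]
    refine gen_anticomm p q fun h => ?_
    have : (i : ℕ) = k := congrArg Fin.val h
    omega
  have hdrop : ∀ a ∈ l.drop ((i : ℕ) + 1), gen p q i * a = -(a * gen p q i) := by
    intro a ha
    rw [List.mem_iff_getElem] at ha
    obtain ⟨k, hk, rfl⟩ := ha
    have hk2 : (i : ℕ) + 1 + k < p + q := by
      simp only [List.length_drop, hlen] at hk; omega
    have he : (List.drop ((↑i : ℕ) + 1) l)[k] = gen p q ⟨(i : ℕ) + 1 + k, hk2⟩ := by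
      simp [hl]
    rw [he]
    refine gen_anticomm p q fun h => ?_
    have : (i : ℕ) = (i : ℕ) + 1 + k := congrArg Fin.val h
    omega
  set x := gen p q i with hx
  set A := (l.take (i : ℕ)).prod with hA'
  set B := (l.drop ((i : ℕ) + 1)).prod with hB'
  have hvol : vol p q = A * (x * B) := by
    rw [vol, ← hl]
    conv_lhs => rw [hsplit]
    rw [List.prod_append, List.prod_cons]
  have hA : x * A = (-1 : Cl p q) ^ (i : ℕ) * (A * x) := by
    have := mul_list_prod_of_anticomm x _ htake
    rwa [List.length_take, hlen, min_eq_left (le_of_lt i.isLt)] at this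
  have hB : x * B = (-1 : Cl p q) ^ (p + q - ((i : ℕ) + 1)) * (B * x) := by
    have := mul_list_prod_of_anticomm x _ hdrop
    rwa [List.length_drop, hlen] at this
  have hBx : B * x = (-1 : Cl p q) ^ (p + q - ((i : ℕ) + 1)) * (x * B) := by
    rw [hB, ← mul_assoc, ← pow_add, ← two_mul]
    simp [pow_mul]
  have h1 : x * vol p q = (-1 : Cl p q) ^ (i : ℕ) * (A * (x * (x * B))) := by
    rw [hvol, ← mul_assoc, hA, mul_assoc, mul_assoc]
  have h2 : vol p q * x = (-1 : Cl p q) ^ (p + q - ((i : ℕ) + 1)) * (A * (x * (x * B))) := by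
    have hcx : Commute ((-1 : Cl p q) ^ (p + q - ((i : ℕ) + 1))) x :=
      (Commute.neg_one_left _).pow_left _
    have hcA : Commute ((-1 : Cl p q) ^ (p + q - ((i : ℕ) + 1))) A :=
      (Commute.neg_one_left _).pow_left _
    rw [hvol, mul_assoc, mul_assoc, hBx, ← mul_assoc x, ← hcx.eq, mul_assoc,
      ← mul_assoc A, ← hcA.eq, mul_assoc]
  have hodd : Odd ((i : ℕ) + (p + q - ((i : ℕ) + 1))) := by
    have : (i : ℕ) + (p + q - ((i : ℕ) + 1)) = p + q - 1 := by omega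
    rw [this]
    rcases hpq with ⟨m, hm⟩
    have hm0 : 0 < p + q := lt_of_le_of_lt (Nat.zero_le _) i.isLt
    exact ⟨m - 1, by omega⟩
  have hsign : ((-1 : Cl p q) ^ (i : ℕ)) = -((-1 : Cl p q) ^ (p + q - ((i : ℕ) + 1))) := by
    have this : ((-1 : Cl p q)) ^ ((i : ℕ) + (p + q - ((i : ℕ) + 1))) = -1 := hodd.neg_one_pow
    rw [pow_add] at this
    have h2' : ((-1 : Cl p q) ^ (p + q - ((i : ℕ) + 1))) * ((-1 : Cl p q) ^ (p + q - ((i : ℕ) + 1))) = 1 := by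
      rw [← pow_add, ← two_mul]; simp [pow_mul]
    calc ((-1 : Cl p q) ^ (i : ℕ))
        = ((-1 : Cl p q) ^ (i : ℕ) * (-1) ^ (p + q - ((i : ℕ) + 1))) * (-1) ^ (p + q - ((i : ℕ) + 1)) := by
          rw [mul_assoc, h2', mul_one]
      _ = -((-1 : Cl p q) ^ (p + q - ((i : ℕ) + 1))) := by rw [this]; simp
  rw [h1, h2, hsign, neg_mul]

lemma ι_mul_vol (p q : ℕ) (hpq : Even (p + q)) (v : Fin (p + q) → ℝ) :
    ι (Qpq p q) v * vol p q = -(vol p q * ι (Qpq p q) v) := by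
  have hv : v = ∑ i : Fin (p + q), v i • (Pi.single i (1 : ℝ) : Fin (p + q) → ℝ) := by
    ext j; simp [Pi.single_apply]
  rw [hv, map_sum, Finset.sum_mul, Finset.mul_sum, ← Finset.sum_neg_distrib]
  refine Finset.sum_congr rfl fun i _ => ?_
  rw [map_smul, smul_mul_assoc, mul_smul_comm, ← smul_neg]
  exact congrArg _ (gen_mul_vol p q hpq i)

set_option maxHeartbeats 2000000 in
lemma karoubi_aux (p q : ℕ) (hpq : Even (p + q))
    (V' : Type*) [AddCommGroup V'] [Module ℝ V'] (Q' Q'' : QuadraticForm ℝ V')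
    (ε : ℝ) (hε : ε * ε = 1)
    (hΩ : vol p q * vol p q = algebraMap ℝ (Cl p q) ε)
    (hQ : ∀ w, ε * Q'' w = Q' w) :
    Nonempty (CliffordAlgebra ((Qpq p q).prod Q') ≃ₐ[ℝ]
      (Cl p q ⊗[ℝ] CliffordAlgebra Q'')) := by
  set Qp : QuadraticForm ℝ ((Fin (p + q) → ℝ) × V') := (Qpq p q).prod Q' with hQp
  -- the forward linear map
  set F : ((Fin (p + q) → ℝ) × V') →ₗ[ℝ] (Cl p q ⊗[ℝ] CliffordAlgebra Q'') :=
    LinearMap.coprod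
      ((Algebra.TensorProduct.includeLeft :
          Cl p q →ₐ[ℝ] Cl p q ⊗[ℝ] CliffordAlgebra Q'').toLinearMap ∘ₗ ι (Qpq p q))
      ((TensorProduct.mk ℝ (Cl p q) (CliffordAlgebra Q'') (vol p q)) ∘ₗ ι Q'') with hF
  have hFapp : ∀ v w, F (v, w) = ι (Qpq p q) v ⊗ₜ[ℝ] 1 + vol p q ⊗ₜ[ℝ] ι Q'' w :=
    fun v w => rfl
  have cond : ∀ m, F m * F m =
      algebraMap ℝ (Cl p q ⊗[ℝ] CliffordAlgebra Q'') (Qp m) := by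
    rintro ⟨v, w⟩
    have expand : ∀ s t : Cl p q ⊗[ℝ] CliffordAlgebra Q'',
        (s + t) * (s + t) = s * s + (s * t + t * s) + t * t := fun s t => by noncomm_ring
    have hss : (ι (Qpq p q) v ⊗ₜ[ℝ] (1 : CliffordAlgebra Q''))
          * (ι (Qpq p q) v ⊗ₜ[ℝ] (1 : CliffordAlgebra Q''))
        = algebraMap ℝ (Cl p q ⊗[ℝ] CliffordAlgebra Q'') (Qpq p q v) := by
      rw [Algebra.TensorProduct.tmul_mul_tmul, ι_sq_scalar, one_mul,
        Algebra.TensorProduct.algebraMap_apply]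
    have hst : (ι (Qpq p q) v ⊗ₜ[ℝ] (1 : CliffordAlgebra Q'')) * (vol p q ⊗ₜ[ℝ] ι Q'' w)
          + (vol p q ⊗ₜ[ℝ] ι Q'' w) * (ι (Qpq p q) v ⊗ₜ[ℝ] (1 : CliffordAlgebra Q'')) = 0 := by
      rw [Algebra.TensorProduct.tmul_mul_tmul, Algebra.TensorProduct.tmul_mul_tmul,
        one_mul, mul_one, ← TensorProduct.add_tmul, ι_mul_vol p q hpq, neg_add_cancel,
        TensorProduct.zero_tmul]
    have htt : (vol p q ⊗ₜ[ℝ] ι Q'' w) * (vol p q ⊗ₜ[ℝ] ι Q'' w)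
        = algebraMap ℝ (Cl p q ⊗[ℝ] CliffordAlgebra Q'') (Q' w) := by
      rw [Algebra.TensorProduct.tmul_mul_tmul, hΩ, ι_sq_scalar,
        Algebra.algebraMap_eq_smul_one, Algebra.algebraMap_eq_smul_one,
        TensorProduct.tmul_smul, ← TensorProduct.smul_tmul', smul_smul,
        mul_comm (Q'' w) ε, hQ, ← Algebra.TensorProduct.one_def,
        ← Algebra.algebraMap_eq_smul_one]
    have hQpapp : Qp (v, w) = Qpq p q v + Q' w := QuadraticMap.prod_apply _ _ _
    rw [hFapp, expand, hss, hst, htt, add_zero, hQpapp, RingHom.map_add]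
  clear hF
  set f : CliffordAlgebra Qp →ₐ[ℝ] (Cl p q ⊗[ℝ] CliffordAlgebra Q'') :=
    CliffordAlgebra.lift Qp ⟨F, cond⟩ with hf
  have hfι : ∀ m, f (ι Qp m) = F m := fun m => CliffordAlgebra.lift_ι_apply _ _ m
  -- the backward maps
  set g₁ : Cl p q →ₐ[ℝ] CliffordAlgebra Qp :=
    CliffordAlgebra.map (QuadraticMap.Isometry.inl (Qpq p q) Q') with hg₁
  have hg₁ι : ∀ v, g₁ (ι (Qpq p q) v) = ι Qp (v, 0) := fun v => by
    rw [hg₁, CliffordAlgebra.map_apply_ι]; rfl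
  set ω₁ : CliffordAlgebra Qp := g₁ (vol p q) with hω₁
  have hω₁sq : ω₁ * ω₁ = algebraMap ℝ (CliffordAlgebra Qp) ε := by
    rw [hω₁, ← map_mul, hΩ, AlgHom.commutes]
  have hanti : ∀ v, ι Qp (v, 0) * ω₁ = -(ω₁ * ι Qp (v, 0)) := by
    intro v
    have h := congrArg g₁ (ι_mul_vol p q hpq v)
    rw [map_mul, map_neg, map_mul, hg₁ι] at h
    exact h
  -- ω₁ commutes with vectors from the right factor
  have hortho : ∀ (w : V') (u : Fin (p + q) → ℝ),
      Qp.IsOrtho (0, w) (u, 0) := by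
    intro w u
    show Qp ((0, w) + (u, 0)) = Qp (0, w) + Qp (u, 0)
    have h1 : ((0, w) + (u, 0) : (Fin (p + q) → ℝ) × V') = (u, w) := by
      ext <;> simp
    rw [h1, hQp]
    rw [QuadraticMap.prod_apply, QuadraticMap.prod_apply, QuadraticMap.prod_apply]
    rw [QuadraticMap.map_zero, QuadraticMap.map_zero]
    ring
  have hcommω : ∀ w : V', ι Qp (0, w) * ω₁ = ω₁ * ι Qp (0, w) := by
    intro w
    have hω₁l : ω₁ = (List.ofFn (fun i : Fin (p + q) =>
        ι Qp ((Pi.single i 1 : Fin (p + q) → ℝ), 0))).prod := by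
      rw [hω₁, vol, map_list_prod]
      congr 1
      rw [List.map_ofFn]
      congr 1
      funext i
      exact hg₁ι _
    rw [hω₁l, mul_list_prod_of_anticomm _ _ ?ha, List.length_ofFn, hpq.neg_one_pow, one_mul]
    intro a ha
    rw [List.mem_ofFn] at ha
    obtain ⟨i, rfl⟩ := ha
    exact ι_mul_ι_comm_of_isOrtho (hortho w _)
  -- the right-hand factor map
  have hQp0w : ∀ w : V', Qp (0, w) = Q' w := by
    intro w
    rw [hQp, QuadraticMap.prod_apply, QuadraticMap.map_zero, zero_add]
  set G : V' →ₗ[ℝ] CliffordAlgebra Qp :=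
    ε • ((LinearMap.mulLeft ℝ ω₁) ∘ₗ (ι Qp) ∘ₗ (LinearMap.inr ℝ (Fin (p + q) → ℝ) V')) with hG
  have hGapp : ∀ w, G w = ε • (ω₁ * ι Qp (0, w)) := fun w => rfl
  have condG : ∀ w, G w * G w = algebraMap ℝ (CliffordAlgebra Qp) (Q'' w) := by
    intro w
    rw [hGapp, smul_mul_smul_comm, hε, one_smul, mul_assoc, ← mul_assoc (ι Qp (0, w)),
      hcommω, mul_assoc, ← mul_assoc, ← mul_assoc, hω₁sq, mul_assoc, ι_sq_scalar, hQp0w,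
      ← RingHom.map_mul]
    congr 1
    rw [← hQ w, ← mul_assoc, hε, one_mul]
  set g₂ : CliffordAlgebra Q'' →ₐ[ℝ] CliffordAlgebra Qp :=
    CliffordAlgebra.lift Q'' ⟨G, condG⟩ with hg₂
  have hg₂ι : ∀ w, g₂ (ι Q'' w) = ε • (ω₁ * ι Qp (0, w)) := fun w =>
    (CliffordAlgebra.lift_ι_apply _ _ w).trans (hGapp w)
  -- images commute
  have hgen : ∀ (v : Fin (p + q) → ℝ) (w : V'),
      Commute (ι Qp (v, 0)) (ε • (ω₁ * ι Qp (0, w))) := by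
    intro v w
    refine Commute.smul_right ?_ ε
    show ι Qp (v, 0) * (ω₁ * ι Qp (0, w)) = (ω₁ * ι Qp (0, w)) * ι Qp (v, 0)
    rw [← mul_assoc, hanti, neg_mul, mul_assoc, ι_mul_ι_comm_of_isOrtho ((hortho w v).symm),
      mul_neg, neg_neg, ← mul_assoc]
  have hcomm : ∀ x y, Commute (g₁ x) (g₂ y) := by
    intro x y
    induction x using CliffordAlgebra.induction with
    | algebraMap r => rw [AlgHom.commutes]; exact Algebra.commute_algebraMap_left r _
    | add a b ha hb => rw [map_add]; exact ha.add_left hb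
    | mul a b ha hb => rw [map_mul]; exact ha.mul_left hb
    | ι v =>
      rw [hg₁ι]
      induction y using CliffordAlgebra.induction with
      | algebraMap r => rw [AlgHom.commutes]; exact Algebra.commute_algebraMap_right r _
      | add a b ha hb => rw [map_add]; exact ha.add_right hb
      | mul a b ha hb => rw [map_mul]; exact ha.mul_right hb
      | ι w => rw [hg₂ι]; exact hgen v w
  set g : (Cl p q ⊗[ℝ] CliffordAlgebra Q'') →ₐ[ℝ] CliffordAlgebra Qp :=
    Algebra.TensorProduct.lift g₁ g₂ hcomm with hg
  have hgl : ∀ x : Cl p q, g (x ⊗ₜ[ℝ] 1) = g₁ x := by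
    intro x
    rw [hg, Algebra.TensorProduct.lift_tmul, map_one, mul_one]
  have hgr : ∀ y : CliffordAlgebra Q'', g ((1 : Cl p q) ⊗ₜ[ℝ] y) = g₂ y := by
    intro y
    rw [hg, Algebra.TensorProduct.lift_tmul, map_one, one_mul]
  -- f ∘ g₁ = includeLeft
  have hfg₁ : ∀ x : Cl p q, f (g₁ x) = x ⊗ₜ[ℝ] 1 := by
    have : f.comp g₁ = (Algebra.TensorProduct.includeLeft :
        Cl p q →ₐ[ℝ] Cl p q ⊗[ℝ] CliffordAlgebra Q'') := by
      refine CliffordAlgebra.hom_ext (LinearMap.ext fun v => ?_)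
      simp only [LinearMap.comp_apply, AlgHom.toLinearMap_apply, AlgHom.comp_apply]
      rw [hg₁ι, hfι, hFapp]
      simp only [map_zero, TensorProduct.tmul_zero, add_zero]
      rfl
    intro x
    have := congrArg (fun h : Cl p q →ₐ[ℝ] Cl p q ⊗[ℝ] CliffordAlgebra Q'' => h x) this
    simpa using this
  have hfω₁ : f ω₁ = vol p q ⊗ₜ[ℝ] 1 := hfg₁ _
  -- f ∘ g = id
  have hfg : f.comp g = AlgHom.id ℝ (Cl p q ⊗[ℝ] CliffordAlgebra Q'') := by
    refine Algebra.TensorProduct.ext ?_ ?_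
    · refine CliffordAlgebra.hom_ext (LinearMap.ext fun v => ?_)
      simp only [LinearMap.comp_apply, AlgHom.toLinearMap_apply, AlgHom.comp_apply,
        Algebra.TensorProduct.includeLeft_apply, AlgHom.id_apply]
      rw [hgl, hfg₁]
    · refine CliffordAlgebra.hom_ext (LinearMap.ext fun w => ?_)
      simp only [LinearMap.comp_apply, AlgHom.toLinearMap_apply, AlgHom.comp_apply,
        Algebra.TensorProduct.includeRight_apply, AlgHom.id_apply,
        AlgHom.restrictScalars_apply]
      rw [hgr, hg₂ι, map_smul, _root_.map_mul f, hfω₁, hfι, hFapp]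
      simp only [map_zero, TensorProduct.zero_tmul, zero_add]
      rw [Algebra.TensorProduct.tmul_mul_tmul, one_mul, hΩ]
      rw [Algebra.algebraMap_eq_smul_one, ← TensorProduct.smul_tmul', smul_smul, hε, one_smul]
  -- g ∘ f = id
  have hgf : g.comp f = AlgHom.id ℝ (CliffordAlgebra Qp) := by
    refine CliffordAlgebra.hom_ext (LinearMap.ext fun m => ?_)
    obtain ⟨v, w⟩ := m
    simp only [LinearMap.comp_apply, AlgHom.toLinearMap_apply, AlgHom.comp_apply,
      AlgHom.id_apply]
    have hgv : g ((vol p q) ⊗ₜ[ℝ] (ι Q'' w)) = ι Qp (0, w) := by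
      rw [hg, Algebra.TensorProduct.lift_tmul, hg₂ι, ← hω₁, mul_smul_comm, ← mul_assoc,
        hω₁sq, Algebra.smul_def, ← mul_assoc, ← RingHom.map_mul, hε, RingHom.map_one,
        one_mul]
    rw [hfι, hFapp, _root_.map_add g, hgl, hg₁ι, hgv]
    rw [← LinearMap.map_add (ι Qp)]
    congr 1
    ext <;> simp
  exact ⟨AlgEquiv.ofAlgHom f g hfg hgf⟩

/-- **Karoubi's theorem**: if `dim V` is even and the volume element ω of `Cl_{p,q}`
satisfies ω² = 1 (positive type), then `Cl(V ⊕ V', Q ⊕ Q') ≅ Cl(V,Q) ⊗ Cl(V',Q')`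
as an ungraded tensor product; if ω² = −1 (negative type), then
`Cl(V ⊕ V', Q ⊕ Q') ≅ Cl(V,Q) ⊗ Cl(V',−Q')`. -/
theorem karoubi_tensor_factorization (p q : ℕ) (hpq : Even (p + q))
    (V' : Type*) [AddCommGroup V'] [Module ℝ V'] (Q' : QuadraticForm ℝ V') :
    (vol p q * vol p q = 1 →
      Nonempty (CliffordAlgebra ((Qpq p q).prod Q') ≃ₐ[ℝ]
        (Cl p q ⊗[ℝ] CliffordAlgebra Q'))) ∧
    (vol p q * vol p q = -1 →
      Nonempty (CliffordAlgebra ((Qpq p q).prod Q') ≃ₐ[ℝ]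
        (Cl p q ⊗[ℝ] CliffordAlgebra (-Q')))) := by
  constructor
  · intro h
    exact karoubi_aux p q hpq V' Q' Q' 1 (by norm_num)
      (by rw [h, RingHom.map_one]) (fun w => one_mul _)
  · intro h
    exact karoubi_aux p q hpq V' Q' (-Q') (-1) (by norm_num)
      (by rw [h, RingHom.map_neg, RingHom.map_one])
      (fun w => by simp)
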